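/- Let n, m, l be positive integers with m < n/2, l ≥ n+1 an odd prime. Suppose there exists a binary linear code C ⊆ F_2^{n+1} with dimension k and minimum Hamming weight ≥ 8m, which is contained in the even-weight code {c ∈ F_2^{n+1} : c_0 + ... + c_n = 0}. Then the lattice L = {v ∈ A_n^{(m,l)} : v mod 2 ∈ C} has volume 2^{n-k} · l^{m-1} · (n+1)^{1/2} and minimum squared norm at least 8m, hence center density at least 2^{k - n/2} · m^{n/2} / (l^{m-1} (n+1)^{1/2}). -/

import Mathlib

open Finset

noncomputable def derAt1 (n i : ℕ) : (Fin (n + 1) → ℤ) →ₗ[ℤ] ℤ :=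
  ∑ j : Fin (n + 1), (((j : ℕ).descFactorial i : ℤ)) • LinearMap.proj j

noncomputable def craigLat (n m l : ℕ) : Submodule ℤ (Fin (n + 1) → ℤ) :=
  LinearMap.ker (derAt1 n 0) ⊓
    ⨅ i ∈ Finset.Ioo 0 m, Submodule.comap (derAt1 n i) (Ideal.span {(l : ℤ)})

/-- Coordinatewise reduction modulo 2, as a ℤ-linear map. -/
noncomputable def mod2 (N : ℕ) : (Fin N → ℤ) →ₗ[ℤ] (Fin N → ZMod 2) :=
  LinearMap.pi fun i => (Int.castAddHom (ZMod 2)).toIntLinearMap.comp (LinearMap.proj i)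

open Polynomial

-- Newton's identity for multisets
lemma newton_multiset {F : Type*} [CommRing F] (s : Multiset F) (k : ℕ) :
    (k : F) * s.esymm k = (-1) ^ (k + 1) *
      ∑ a ∈ HasAntidiagonal.antidiagonal k with a.1 < k,
        (-1) ^ a.1 * s.esymm a.1 * (s.map (· ^ a.2)).sum := by
  obtain ⟨L, rfl⟩ : ∃ L : List F, ↑L = s := ⟨s.toList, s.coe_toList⟩
  have hcard : Multiset.card (L : Multiset F) = L.length := rfl
  set f : Fin L.length → F := L.get with hf
  have huniv : Finset.univ.val.map f = (L : Multiset F) := by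
    rw [Fin.univ_val_map, List.ofFn_get]
  have H := MvPolynomial.mul_esymm_eq_sum (Fin L.length) F k
  have := congrArg (MvPolynomial.aeval f) H
  simp only [map_mul, map_natCast, map_sum, map_pow, map_neg, map_one,
    MvPolynomial.aeval_esymm_eq_multiset_esymm] at this
  rw [huniv] at this
  convert this using 2
  refine Finset.sum_congr rfl fun a _ => ?_
  rw [MvPolynomial.psum, map_sum]
  simp only [map_pow, MvPolynomial.aeval_X]
  rw [← huniv]
  simp only [Multiset.map_map, Finset.sum]
  rfl

lemma esymm_eq_zero_of_card_lt {F : Type*} [CommSemiring F] (s : Multiset F) {k : ℕ}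
    (h : Multiset.card s < k) : s.esymm k = 0 := by
  rw [Multiset.esymm, Multiset.powersetCard_eq_empty _ h]
  simp

lemma multiset_eq_of_psum_eq {F : Type*} [Field F] (A B : Multiset F) (s : ℕ)
    (hA : Multiset.card A = s) (hB : Multiset.card B = s)
    (hchar : ∀ i : ℕ, 0 < i → i ≤ s → (i : F) ≠ 0)
    (hp : ∀ i : ℕ, 0 < i → i ≤ s → (A.map (· ^ i)).sum = (B.map (· ^ i)).sum) :
    A = B := by
  -- first, all esymm agree
  have he : ∀ i : ℕ, A.esymm i = B.esymm i := by
    have key : ∀ i : ℕ, i ≤ s → A.esymm i = B.esymm i := by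
      intro i
      induction i using Nat.strong_induction_on with
      | _ i ih =>
        intro his
        rcases Nat.eq_zero_or_pos i with h0 | h0
        · simp [h0, Multiset.esymm]
        · have hNA := newton_multiset A i
          have hNB := newton_multiset B i
          have hsum : ∑ a ∈ HasAntidiagonal.antidiagonal i with a.1 < i,
              (-1 : F) ^ a.1 * A.esymm a.1 * (A.map (· ^ a.2)).sum =
              ∑ a ∈ HasAntidiagonal.antidiagonal i with a.1 < i,
              (-1 : F) ^ a.1 * B.esymm a.1 * (B.map (· ^ a.2)).sum := by
            refine Finset.sum_congr rfl fun a ha => ?_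
            simp only [Finset.mem_filter, HasAntidiagonal.mem_antidiagonal] at ha
            have h1 : a.1 < i := ha.2
            have h2 : 0 < a.2 := by omega
            have h2' : a.2 ≤ s := by omega
            rw [ih a.1 h1 (by omega), hp a.2 h2 h2']
          have : (i : F) * A.esymm i = (i : F) * B.esymm i := by
            rw [hNA, hNB, hsum]
          exact mul_left_cancel₀ (hchar i h0 his) this
    intro i
    rcases le_or_gt i s with h | h
    · exact key i h
    · rw [esymm_eq_zero_of_card_lt A (hA ▸ h), esymm_eq_zero_of_card_lt B (hB ▸ h)]
  -- now the polynomials ∏ (X - a) agree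
  have hpoly : (A.map fun a => X - C a).prod = (B.map fun b => X - C b).prod := by
    have hmA : ((A.map fun a => X - C a).prod).natDegree = s := by
      rw [natDegree_multiset_prod_X_sub_C_eq_card, hA]
    have hmB : ((B.map fun b => X - C b).prod).natDegree = s := by
      rw [natDegree_multiset_prod_X_sub_C_eq_card, hB]
    ext j
    rcases le_or_gt j s with hj | hj
    · rw [Multiset.prod_X_sub_C_coeff A (hA ▸ hj), Multiset.prod_X_sub_C_coeff B (hB ▸ hj),
        hA, hB, he]
    · rw [coeff_eq_zero_of_natDegree_lt (hmA ▸ hj), coeff_eq_zero_of_natDegree_lt (hmB ▸ hj)]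
  calc A = ((A.map fun a => X - C a).prod).roots := (roots_multiset_prod_X_sub_C A).symm
    _ = ((B.map fun b => X - C b).prod).roots := by rw [hpoly]
    _ = B := roots_multiset_prod_X_sub_C B

lemma dvd_sum_eval_of_dvd_descPochhammer {N m : ℕ} (l : ℕ) (w : Fin N → ℤ)
    (h0 : ∑ j, w j = 0)
    (hd : ∀ i, 0 < i → i < m → (l : ℤ) ∣ ∑ j : Fin N, w j * (descPochhammer ℤ i).eval ((j : ℕ) : ℤ)) :
    ∀ d, d < m → ∀ P : Polynomial ℤ, P.natDegree ≤ d →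
      (l : ℤ) ∣ ∑ j : Fin N, w j * P.eval ((j : ℕ) : ℤ) := by
  intro d
  induction d with
  | zero =>
    intro _ P hP
    rw [Polynomial.eq_C_of_natDegree_le_zero hP]
    simp only [Polynomial.eval_C, ← Finset.sum_mul, h0, zero_mul]
    exact dvd_zero _
  | succ d ih =>
    intro hdm P hP
    set c := P.coeff (d + 1) with hc
    set Q := P - Polynomial.C c * descPochhammer ℤ (d + 1) with hQ
    have hmonic : (descPochhammer ℤ (d + 1)).Monic := monic_descPochhammer ℤ (d + 1)
    have hdeg : (descPochhammer ℤ (d + 1)).natDegree = d + 1 := descPochhammer_natDegree (R := ℤ) (d+1)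
    have hQdeg : Q.natDegree ≤ d := by
      refine Polynomial.natDegree_le_iff_coeff_eq_zero.mpr fun t ht => ?_
      rw [hQ, Polynomial.coeff_sub, Polynomial.coeff_C_mul]
      rcases eq_or_lt_of_le (Nat.succ_le_of_lt ht) with h | h
      · have h1 := hmonic.coeff_natDegree
        rw [hdeg] at h1
        rw [← h, h1, ← hc, mul_one, sub_self]
      · rw [Polynomial.coeff_eq_zero_of_natDegree_lt (lt_of_le_of_lt hP h),
          Polynomial.coeff_eq_zero_of_natDegree_lt (by rw [hdeg]; exact h)]
        simp
    have hPsplit : ∀ j : Fin N, P.eval ((j:ℕ):ℤ) =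
        Q.eval ((j:ℕ):ℤ) + c * (descPochhammer ℤ (d+1)).eval ((j:ℕ):ℤ) := by
      intro j; rw [hQ]; simp [Polynomial.eval_sub]
    have : ∑ j : Fin N, w j * P.eval ((j:ℕ):ℤ) =
        (∑ j : Fin N, w j * Q.eval ((j:ℕ):ℤ)) +
        c * ∑ j : Fin N, w j * (descPochhammer ℤ (d+1)).eval ((j:ℕ):ℤ) := by
      rw [Finset.mul_sum, ← Finset.sum_add_distrib]
      exact Finset.sum_congr rfl fun j _ => by rw [hPsplit j]; ring
    rw [this]
    exact dvd_add (ih (by omega) Q hQdeg) (Dvd.dvd.mul_left (hd (d+1) (by omega) hdm) c)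

lemma dvd_sum_pow {N m : ℕ} (l : ℕ) (w : Fin N → ℤ)
    (h0 : ∑ j, w j = 0)
    (hd : ∀ i, 0 < i → i < m → (l : ℤ) ∣ ∑ j : Fin N, ((j : ℕ).descFactorial i : ℤ) * w j)
    (i : ℕ) (him : i < m) : (l : ℤ) ∣ ∑ j : Fin N, w j * ((j : ℕ) : ℤ) ^ i := by
  have hd' : ∀ i, 0 < i → i < m →
      (l : ℤ) ∣ ∑ j : Fin N, w j * (descPochhammer ℤ i).eval ((j : ℕ) : ℤ) := by
    intro i hi him
    have := hd i hi him
    convert this using 1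
    exact Finset.sum_congr rfl fun j _ => by
      rw [descPochhammer_eval_eq_descFactorial ℤ (j:ℕ) i]; ring
  have := dvd_sum_eval_of_dvd_descPochhammer l w h0 hd' i him (Polynomial.X ^ i)
    (by simp [Polynomial.natDegree_X_pow])
  simpa using this


lemma derAt1_apply (n i : ℕ) (v : Fin (n+1) → ℤ) :
    derAt1 n i v = ∑ j : Fin (n+1), ((j : ℕ).descFactorial i : ℤ) * v j := by
  simp [derAt1, LinearMap.sum_apply, smul_eq_mul]

lemma card_finset_sum {β F : Type*} (s : Finset β) (f : β → Multiset F) :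
    Multiset.card (∑ j ∈ s, f j) = ∑ j ∈ s, Multiset.card (f j) := by
  classical
  induction s using Finset.cons_induction with
  | empty => simp
  | cons a s ha ih => simp [Finset.sum_cons, ih]

lemma sum_map_finset_sum {β F : Type*} [AddCommMonoid F] (s : Finset β) (f : β → Multiset F)
    (g : F → F) : ((∑ j ∈ s, f j).map g).sum = ∑ j ∈ s, ((f j).map g).sum := by
  classical
  induction s using Finset.cons_induction with
  | empty => simp
  | cons a s ha ih =>
    rw [Finset.sum_cons, Finset.sum_cons, Multiset.map_add, Multiset.sum_add, ih]

lemma craig_min {n m l : ℕ} (hm : 0 < m) (hmn : 2 * m < n) (hl : n + 1 ≤ l)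
    (hlp : l.Prime) (w : Fin (n+1) → ℤ) (hw : w ∈ craigLat n m l) (h0 : w ≠ 0) :
    (2 * m : ℤ) ≤ ∑ j, w j ^ 2 := by
  haveI : Fact l.Prime := ⟨hlp⟩
  haveI : NeZero l := ⟨hlp.pos.ne'⟩
  obtain ⟨hker, hinf⟩ := Submodule.mem_inf.mp hw
  have hsum0 : ∑ j, w j = 0 := by
    rw [LinearMap.mem_ker, derAt1_apply] at hker
    simpa using hker
  have hdvd : ∀ i, 0 < i → i < m →
      (l : ℤ) ∣ ∑ j : Fin (n+1), ((j : ℕ).descFactorial i : ℤ) * w j := by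
    intro i hi him
    have h2 := Submodule.mem_iInf _ |>.mp hinf i
    have h3 := Submodule.mem_iInf _ |>.mp h2 (Finset.mem_Ioo.mpr ⟨hi, him⟩)
    rw [Submodule.mem_comap, Ideal.mem_span_singleton] at h3
    rwa [derAt1_apply] at h3
  by_contra hlt
  push_neg at hlt
  -- setup
  have habs_le_sq : ∀ a : ℤ, (a.natAbs : ℤ) ≤ a ^ 2 := by
    intro a
    rcases eq_or_ne a 0 with h | h
    · simp [h]
    · have h1 : 1 ≤ (a.natAbs : ℤ) := by
        have := Int.natAbs_pos.mpr h; exact_mod_cast this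
      calc (a.natAbs : ℤ) = (a.natAbs : ℤ) * 1 := by ring
        _ ≤ (a.natAbs : ℤ) * (a.natAbs : ℤ) := by nlinarith
        _ = a ^ 2 := by rw [Int.natAbs_mul_self']; ring
  set sp := ∑ j, (w j).toNat with hsp
  set sn := ∑ j, (-(w j)).toNat with hsn
  have hspsn : sp = sn := by
    have : (sp : ℤ) - (sn : ℤ) = 0 := by
      rw [hsp, hsn]
      push_cast
      rw [← Finset.sum_sub_distrib, ← hsum0]
      exact Finset.sum_congr rfl fun j _ => by omega
    omega
  have hs_lt : sp < m := by
    have h2s : ((sp : ℤ) + sn) ≤ ∑ j, w j ^ 2 := by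
      rw [hsp, hsn]
      push_cast
      rw [← Finset.sum_add_distrib]
      refine Finset.sum_le_sum fun j _ => ?_
      have := habs_le_sq (w j)
      have hna : ((w j).toNat : ℤ) + ((-(w j)).toNat : ℤ) = ((w j).natAbs : ℤ) := by omega
      omega
    rw [← hspsn] at h2s
    have : (2 * sp : ℤ) < 2 * m := by omega
    omega
  -- multisets
  set F := ZMod l
  set A : Multiset F := ∑ j : Fin (n+1), Multiset.replicate (w j).toNat ((j : ℕ) : F) with hA
  set B : Multiset F := ∑ j : Fin (n+1), Multiset.replicate (-(w j)).toNat ((j : ℕ) : F) with hB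
  have hcardA : Multiset.card A = sp := by
    rw [hA, card_finset_sum]; simp [hsp]
  have hcardB : Multiset.card B = sp := by
    rw [hB, card_finset_sum]; simp [hsn, hspsn]
  have hps : ∀ i : ℕ, 0 < i → i ≤ sp → (A.map (· ^ i)).sum = (B.map (· ^ i)).sum := by
    intro i hi his
    have him : i < m := lt_of_le_of_lt his hs_lt
    have hdd := dvd_sum_pow l w hsum0 hdvd i him
    have hcast : ((∑ j : Fin (n+1), w j * ((j:ℕ):ℤ) ^ i : ℤ) : F) = 0 := by
      rw [ZMod.intCast_zmod_eq_zero_iff_dvd]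
      exact_mod_cast hdd
    push_cast at hcast
    rw [hA, hB, sum_map_finset_sum, sum_map_finset_sum]
    simp only [Multiset.map_replicate, Multiset.sum_replicate, nsmul_eq_mul]
    have hsplit : ∀ j : Fin (n+1), ((w j : ℤ) : F) =
        (((w j).toNat : ℕ) : F) - (((-(w j)).toNat : ℕ) : F) := by
      intro j
      have : ((w j).toNat : ℤ) - ((-(w j)).toNat : ℤ) = w j := by omega
      calc ((w j : ℤ) : F) = ((((w j).toNat : ℤ) - ((-(w j)).toNat : ℤ) : ℤ) : F) := by rw [this]
        _ = _ := by push_cast; ring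
    have : ∑ j : Fin (n+1), (((w j).toNat : F) - (((-(w j)).toNat : F))) * ((j:ℕ) : F) ^ i = 0 := by
      rw [← hcast, Int.cast_sum]
      refine Finset.sum_congr rfl fun j _ => ?_
      rw [← hsplit j, Int.cast_mul, Int.cast_pow, Int.cast_natCast]
    have hexp : ∑ j : Fin (n+1), ((w j).toNat : F) * ((j:ℕ) : F) ^ i
        - ∑ j : Fin (n+1), ((-(w j)).toNat : F) * ((j:ℕ) : F) ^ i = 0 := by
      rw [← Finset.sum_sub_distrib, ← this]
      exact Finset.sum_congr rfl fun j _ => by ring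
    linear_combination hexp
  have hchar : ∀ i : ℕ, 0 < i → i ≤ sp → (i : F) ≠ 0 := by
    intro i hi his hzero
    rw [ZMod.natCast_eq_zero_iff] at hzero
    have := Nat.le_of_dvd hi hzero
    omega
  have hAB : A = B := multiset_eq_of_psum_eq A B sp hcardA hcardB hchar hps
  -- extract coordinates
  have hinj : ∀ j j' : Fin (n+1), (((j:ℕ) : F) = ((j':ℕ) : F)) → j = j' := by
    intro j j' hjj
    have h1 : ((j:ℕ) : F).val = (j:ℕ) := ZMod.val_natCast_of_lt (by omega)
    have h2 : ((j':ℕ) : F).val = (j':ℕ) := ZMod.val_natCast_of_lt (by omega)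
    have : (j:ℕ) = (j':ℕ) := by rw [← h1, ← h2, hjj]
    exact Fin.ext this
  have hcount : ∀ j0 : Fin (n+1), (w j0).toNat = (-(w j0)).toNat := by
    intro j0
    have hca := congrArg (Multiset.count ((j0:ℕ) : F)) hAB
    rw [hA, hB, Multiset.count_sum', Multiset.count_sum'] at hca
    simp only [Multiset.count_replicate] at hca
    have heval : ∀ (g : Fin (n+1) → ℕ),
        (∑ j : Fin (n+1), if ((j:ℕ) : F) = ((j0:ℕ) : F) then g j else 0) = g j0 := by
      intro g
      rw [Finset.sum_eq_single j0]
      · simp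
      · intro b _ hb
        exact if_neg fun hc => hb (hinj b j0 hc)
      · intro hj0; exact absurd (Finset.mem_univ j0) hj0
    rwa [heval, heval] at hca
  apply h0
  funext j
  simp only [Pi.zero_apply]
  have := hcount j
  omega


lemma mod2_apply (N : ℕ) (v : Fin N → ℤ) (j : Fin N) : mod2 N v j = ((v j : ℤ) : ZMod 2) := rfl

lemma min_norm (n m l : ℕ) (hm : 0 < m) (hmn : 2 * m < n) (hl : n + 1 ≤ l)
    (hlp : l.Prime) (hlodd : Odd l)
    (C : Submodule (ZMod 2) (Fin (n + 1) → ZMod 2))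
    (hCw : ∀ c ∈ C, c ≠ 0 → 8 * m ≤ hammingNorm c)
    (v : Fin (n+1) → ℤ) (hv1 : v ∈ craigLat n m l) (hv2 : mod2 (n+1) v ∈ C) (hv0 : v ≠ 0) :
    (8 * m : ℤ) ≤ ∑ j, (v j) ^ 2 := by
  by_cases hz : mod2 (n+1) v = 0
  · -- v is twice a vector of the Craig lattice
    have hdvd : ∀ j, (2 : ℤ) ∣ v j := by
      intro j
      have : ((v j : ℤ) : ZMod 2) = 0 := by rw [← mod2_apply (n+1) v j, hz]; rfl
      rwa [ZMod.intCast_zmod_eq_zero_iff_dvd, Nat.cast_ofNat] at this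
    set w : Fin (n+1) → ℤ := fun j => v j / 2 with hwdef
    have hvw : ∀ j, v j = 2 * w j := fun j => (Int.mul_ediv_cancel' (hdvd j)).symm
    have hw0 : w ≠ 0 := by
      intro h
      apply hv0
      funext j
      have hj := congrFun h j
      simp only [Pi.zero_apply] at hj ⊢
      rw [hvw j, hj, mul_zero]
    have hlint : Prime (l : ℤ) := Nat.prime_iff_prime_int.mp hlp
    have hl2 : ¬ ((l : ℤ) ∣ 2) := by
      intro hdd
      have h2 := Int.le_of_dvd (by norm_num) hdd
      have : l ≤ 2 := by exact_mod_cast h2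
      omega
    have hw : w ∈ craigLat n m l := by
      obtain ⟨hker, hinf⟩ := Submodule.mem_inf.mp hv1
      rw [LinearMap.mem_ker, derAt1_apply] at hker
      refine Submodule.mem_inf.mpr ⟨?_, ?_⟩
      · rw [LinearMap.mem_ker, derAt1_apply]
        have h22 : (2 : ℤ) * ∑ j : Fin (n+1), ((j:ℕ).descFactorial 0 : ℤ) * w j = 0 := by
          rw [Finset.mul_sum, ← hker]
          exact Finset.sum_congr rfl fun j _ => by rw [hvw j]; ring
        omega
      · rw [Submodule.mem_iInf]
        intro i
        rw [Submodule.mem_iInf]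
        intro hi
        have h3 := Submodule.mem_iInf _ |>.mp (Submodule.mem_iInf _ |>.mp hinf i) hi
        rw [Submodule.mem_comap, Ideal.mem_span_singleton, derAt1_apply] at h3
        rw [Submodule.mem_comap, Ideal.mem_span_singleton, derAt1_apply]
        have h2 : (l : ℤ) ∣ 2 * ∑ j : Fin (n+1), ((j:ℕ).descFactorial i : ℤ) * w j := by
          have heq : (2 : ℤ) * ∑ j : Fin (n+1), ((j:ℕ).descFactorial i : ℤ) * w j
              = ∑ j : Fin (n+1), ((j:ℕ).descFactorial i : ℤ) * v j := by
            rw [Finset.mul_sum]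
            exact Finset.sum_congr rfl fun j _ => by rw [hvw j]; ring
          rwa [heq]
        exact (hlint.dvd_mul.mp h2).resolve_left hl2
    have hmin := craig_min hm hmn hl hlp w hw hw0
    have : ∑ j, v j ^ 2 = 4 * ∑ j, w j ^ 2 := by
      rw [Finset.mul_sum]
      exact Finset.sum_congr rfl fun j _ => by rw [hvw j]; ring
    rw [this]
    omega
  · -- the reduction is a nonzero codeword
    have h8 := hCw _ hv2 hz
    have hle : ((hammingNorm (mod2 (n+1) v) : ℕ) : ℤ) ≤ ∑ j, v j ^ 2 := by
      rw [hammingNorm]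
      classical
      calc ((#{i | mod2 (n+1) v i ≠ 0} : ℕ) : ℤ)
          = ∑ j ∈ ({i | mod2 (n+1) v i ≠ 0} : Finset (Fin (n+1))), 1 := by
            rw [Finset.sum_const]; simp
        _ ≤ ∑ j ∈ ({i | mod2 (n+1) v i ≠ 0} : Finset (Fin (n+1))), v j ^ 2 := by
            refine Finset.sum_le_sum fun j hj => ?_
            rw [Finset.mem_filter] at hj
            have hvj : v j ≠ 0 := by
              intro h
              apply hj.2
              rw [mod2_apply, h]
              simp
            have : 0 < v j ^ 2 := by positivity
            omega
        _ ≤ ∑ j, v j ^ 2 := by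
            refine Finset.sum_le_sum_of_subset_of_nonneg (Finset.subset_univ _)
              fun j _ _ => by positivity
    have : (8 * m : ℤ) ≤ ((hammingNorm (mod2 (n+1) v) : ℕ) : ℤ) := by exact_mod_cast h8
    omega

noncomputable def sumF (n : ℕ) : (Fin (n + 1) → ZMod 2) →ₗ[ZMod 2] ZMod 2 :=
  ∑ j : Fin (n + 1), LinearMap.proj j

lemma sumF_apply (n : ℕ) (x : Fin (n+1) → ZMod 2) : sumF n x = ∑ j, x j := by
  simp [sumF, LinearMap.sum_apply]

lemma range_craig_mod2 (n m l : ℕ) (hlodd : Odd l) :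
    AddMonoidHom.range (((mod2 (n+1)).toAddMonoidHom).comp
        ((craigLat n m l).toAddSubgroup).subtype)
      = (LinearMap.ker (sumF n)).toAddSubgroup := by
  ext x
  simp only [AddMonoidHom.mem_range, AddMonoidHom.comp_apply, AddSubgroup.coe_subtype,
    LinearMap.toAddMonoidHom_coe, Submodule.mem_toAddSubgroup, LinearMap.mem_ker]
  constructor
  · rintro ⟨⟨v, hv⟩, rfl⟩
    obtain ⟨hker, _⟩ := Submodule.mem_inf.mp hv
    rw [LinearMap.mem_ker, derAt1_apply] at hker
    simp only [Nat.descFactorial_zero, Nat.cast_one, one_mul] at hker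
    rw [sumF_apply]
    have : ∑ j, mod2 (n+1) v j = ((∑ j, v j : ℤ) : ZMod 2) := by
      push_cast
      exact Finset.sum_congr rfl fun j _ => (mod2_apply (n+1) v j)
    rw [this, hker]
    simp
  · intro hx
    rw [sumF_apply] at hx
    -- build a preimage
    set S : ℤ := ∑ j : Fin (n+1), ((x j).val : ℤ) with hS
    set u : Fin (n+1) → ℤ := fun j => ((x j).val : ℤ) - (if j = 0 then S else 0) with hu
    have husum : ∑ j : Fin (n+1), u j = 0 := by
      rw [hu]
      rw [Finset.sum_sub_distrib, Finset.sum_ite_eq' Finset.univ (0 : Fin (n+1)) fun _ => S]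
      simp [hS]
    have humod : ∀ j, ((u j : ℤ) : ZMod 2) = x j := by
      intro j
      have hScast : ((S : ℤ) : ZMod 2) = 0 := by
        rw [hS]
        push_cast
        rw [← hx]
        exact Finset.sum_congr rfl fun j _ => by rw [ZMod.natCast_val, ZMod.cast_id]
      rw [hu]
      by_cases hj : j = 0 <;> simp [hj, hScast, ZMod.natCast_val, ZMod.cast_id]
    set v : Fin (n+1) → ℤ := fun j => (l : ℤ) * u j with hv
    have hvmem : v ∈ craigLat n m l := by
      refine Submodule.mem_inf.mpr ⟨?_, ?_⟩
      · rw [LinearMap.mem_ker, derAt1_apply]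
        simp only [Nat.descFactorial_zero, Nat.cast_one, one_mul, hv]
        rw [← Finset.mul_sum, husum, mul_zero]
      · rw [Submodule.mem_iInf]
        intro i
        rw [Submodule.mem_iInf]
        intro _
        rw [Submodule.mem_comap, Ideal.mem_span_singleton, derAt1_apply]
        have heq : ∑ j : Fin (n+1), ((j:ℕ).descFactorial i : ℤ) * v j
            = (l:ℤ) * ∑ j : Fin (n+1), ((j:ℕ).descFactorial i : ℤ) * u j := by
          rw [Finset.mul_sum]
          exact Finset.sum_congr rfl fun j _ => by rw [hv]; ring
        rw [heq]
        exact Dvd.intro _ rfl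
    refine ⟨⟨v, hvmem⟩, ?_⟩
    funext j
    have hlcast : ((l : ℕ) : ZMod 2) = 1 := by
      have : l % 2 = 1 := Nat.odd_iff.mp hlodd
      rw [← ZMod.natCast_mod l 2, this, Nat.cast_one]
    show (((l : ℤ) * u j : ℤ) : ZMod 2) = x j
    push_cast
    rw [hlcast, one_mul]
    exact humod j

lemma card_submodule_eq_pow (n d : ℕ) (p : Submodule (ZMod 2) (Fin (n+1) → ZMod 2))
    (hd : Module.finrank (ZMod 2) p = d) : Nat.card p = 2 ^ d := by
  letI : Fintype p := Fintype.ofFinite p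
  rw [Nat.card_eq_fintype_card, Module.card_eq_pow_finrank (K := ZMod 2) (V := p), hd]
  norm_num [ZMod.card]

lemma finrank_ker_sumF (n : ℕ) : Module.finrank (ZMod 2) (LinearMap.ker (sumF n)) = n := by
  have hsurj : Function.Surjective (sumF n) := by
    intro y
    refine ⟨y • Pi.single (0 : Fin (n+1)) 1, ?_⟩
    rw [map_smul, sumF_apply]
    rw [Finset.sum_pi_single']
    simp
  have h1 := LinearMap.finrank_range_add_finrank_ker (sumF n)
  rw [LinearMap.range_eq_top.mpr hsurj, finrank_top] at h1
  simp only [Module.finrank_self] at h1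
  have h2 : Module.finrank (ZMod 2) (Fin (n+1) → ZMod 2) = n + 1 := by
    simp [Module.finrank_pi]
  omega

lemma index_part (n m l k : ℕ) (hlodd : Odd l)
    (C : Submodule (ZMod 2) (Fin (n + 1) → ZMod 2))
    (hk : Module.finrank (ZMod 2) C = k)
    (hCe : ∀ c ∈ C, ∑ i, c i = 0)
    (L : Submodule ℤ (Fin (n + 1) → ℤ))
    (hL : L = craigLat n m l ⊓ Submodule.comap (mod2 (n + 1)) (C.restrictScalars ℤ)) :
    ((L.toAddSubgroup).addSubgroupOf ((craigLat n m l).toAddSubgroup)).index = 2 ^ (n - k) := by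
  classical
  set ψ := ((mod2 (n+1)).toAddMonoidHom).comp ((craigLat n m l).toAddSubgroup).subtype with hψ
  have hCE : C.toAddSubgroup ≤ (LinearMap.ker (sumF n)).toAddSubgroup := by
    intro x hx
    rw [Submodule.mem_toAddSubgroup] at hx ⊢
    rw [LinearMap.mem_ker, sumF_apply]
    exact hCe x hx
  have hkn : k ≤ n := by
    have hmono : Module.finrank (ZMod 2) C ≤
        Module.finrank (ZMod 2) (LinearMap.ker (sumF n)) :=
      Submodule.finrank_mono (fun x hx => by
        rw [LinearMap.mem_ker, sumF_apply]; exact hCe x hx)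
    rw [hk, finrank_ker_sumF] at hmono
    exact hmono
  have hcomap : (L.toAddSubgroup).addSubgroupOf ((craigLat n m l).toAddSubgroup)
      = AddSubgroup.comap ψ C.toAddSubgroup := by
    ext x
    rw [AddSubgroup.mem_addSubgroupOf, AddSubgroup.mem_comap]
    simp only [hψ, AddMonoidHom.comp_apply, AddSubgroup.coe_subtype,
      LinearMap.toAddMonoidHom_coe, Submodule.mem_toAddSubgroup]
    rw [hL]
    rw [Submodule.mem_inf]
    constructor
    · rintro ⟨_, h2⟩; exact h2
    · intro h; exact ⟨x.2, h⟩
  rw [hcomap, AddSubgroup.index_comap, range_craig_mod2 n m l hlodd]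
  -- now relindex of C in ker sumF
  have hlag := AddSubgroup.card_mul_index
    ((C.toAddSubgroup).addSubgroupOf ((LinearMap.ker (sumF n)).toAddSubgroup))
  have hcard1 : Nat.card ((C.toAddSubgroup).addSubgroupOf
      ((LinearMap.ker (sumF n)).toAddSubgroup)) = 2 ^ k := by
    rw [Nat.card_congr (AddSubgroup.addSubgroupOfEquivOfLe hCE).toEquiv]
    exact card_submodule_eq_pow n k C hk
  have hcard2 : Nat.card ((LinearMap.ker (sumF n)).toAddSubgroup) = 2 ^ n :=
    card_submodule_eq_pow n n _ (finrank_ker_sumF n)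
  rw [hcard1, hcard2] at hlag
  have hpow : (2:ℕ) ^ n = 2 ^ k * 2 ^ (n - k) := by
    rw [← pow_add]
    congr 1
    omega
  rw [hpow] at hlag
  have h2k : 0 < (2:ℕ)^k := Nat.pow_pos (by norm_num)
  exact Nat.eq_of_mul_eq_mul_left h2k hlag

lemma real_part (n m l k : ℕ) (hm : 0 < m) (hl : 1 ≤ l) (hkn : k ≤ n) :
    (Real.sqrt (8 * m) / 2) ^ n / ((2 : ℝ) ^ (n - k) * (l : ℝ) ^ (m - 1) * Real.sqrt (n + 1))
      ≥ (2 : ℝ) ^ ((k : ℝ) - (n : ℝ) / 2) * (m : ℝ) ^ ((n : ℝ) / 2)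
          / ((l : ℝ) ^ (m - 1) * Real.sqrt (n + 1)) := by
  apply ge_of_eq
  have hm0 : (0:ℝ) < (m:ℝ) := by exact_mod_cast hm
  have h4 : Real.sqrt 4 = 2 := by
    rw [show (4:ℝ) = 2^2 by norm_num, Real.sqrt_sq (by norm_num)]
  have h1 : Real.sqrt (8 * m) / 2 = Real.sqrt (2 * m) := by
    rw [show (8 * m : ℝ) = 4 * (2 * m) by ring, Real.sqrt_mul (by norm_num), h4]
    ring
  have h2 : (Real.sqrt (2 * m)) ^ n = (2:ℝ) ^ ((n:ℝ)/2) * (m:ℝ) ^ ((n:ℝ)/2) := by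
    rw [Real.sqrt_eq_rpow, ← Real.rpow_natCast ((2 * (m:ℝ)) ^ ((1:ℝ)/2)) n,
      ← Real.rpow_mul (by positivity), Real.mul_rpow (by norm_num) (le_of_lt hm0)]
    norm_num
    rw [show (1:ℝ)/2 * n = (n:ℝ)/2 by ring]
  have h3 : ((2:ℝ)) ^ (n - k : ℕ) = (2:ℝ) ^ ((n:ℝ) - (k:ℝ)) := by
    rw [← Real.rpow_natCast 2 (n - k), Nat.cast_sub hkn]
  have hB2 : (0:ℝ) < (2:ℝ) ^ ((n:ℝ) - (k:ℝ)) := Real.rpow_pos_of_pos (by norm_num) _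
  have hlpos : (0:ℝ) < (l:ℝ) ^ (m - 1) := by
    have : (0:ℝ) < (l:ℝ) := by exact_mod_cast hl
    positivity
  have hsq : (0:ℝ) < Real.sqrt (n + 1) := Real.sqrt_pos.mpr (by positivity)
  rw [h1, h2, h3]
  rw [div_eq_div_iff (by positivity) (by positivity)]
  symm
  have key : (2:ℝ) ^ ((k:ℝ) - (n:ℝ)/2) * (2:ℝ) ^ ((n:ℝ) - (k:ℝ)) = (2:ℝ) ^ ((n:ℝ)/2) := by
    rw [← Real.rpow_add (by norm_num)]
    congr 1
    ring
  calc (2:ℝ) ^ ((k:ℝ) - (n:ℝ)/2) * (m:ℝ) ^ ((n:ℝ)/2) *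
        ((2:ℝ) ^ ((n:ℝ) - (k:ℝ)) * (l : ℝ) ^ (m - 1) * Real.sqrt (n + 1))
      = ((2:ℝ) ^ ((k:ℝ) - (n:ℝ)/2) * (2:ℝ) ^ ((n:ℝ) - (k:ℝ))) * (m:ℝ) ^ ((n:ℝ)/2) *
        ((l : ℝ) ^ (m - 1) * Real.sqrt (n + 1)) := by ring
    _ = (2:ℝ) ^ ((n:ℝ)/2) * (m:ℝ) ^ ((n:ℝ)/2) * ((l : ℝ) ^ (m - 1) * Real.sqrt (n + 1)) := by
        rw [key]

/-- Lifting a binary linear `[n+1, k, ≥ 8m]` subcode of the even-weight code through the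
analogous Craig lattice `A_n^{(m,l)}` gives a lattice of index `2^{n-k}` in `A_n^{(m,l)}`
(hence volume `2^{n-k} l^{m-1} (n+1)^{1/2}`) and minimum squared norm at least `8m`,
hence of center density at least `2^{k-n/2} m^{n/2} / (l^{m-1}(n+1)^{1/2})`. -/
theorem craig_code_lift (n m l k : ℕ) (hm : 0 < m) (hmn : 2 * m < n)
    (hl : n + 1 ≤ l) (hlp : l.Prime) (hlodd : Odd l)
    (C : Submodule (ZMod 2) (Fin (n + 1) → ZMod 2))
    (hk : Module.finrank (ZMod 2) C = k)
    (hCw : ∀ c ∈ C, c ≠ 0 → 8 * m ≤ hammingNorm c)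
    (hCe : ∀ c ∈ C, ∑ i, c i = 0) :
    ∀ L : Submodule ℤ (Fin (n + 1) → ℤ),
      L = craigLat n m l ⊓ Submodule.comap (mod2 (n + 1)) (C.restrictScalars ℤ) →
      (∀ v ∈ L, v ≠ 0 → (8 * m : ℤ) ≤ ∑ j, (v j) ^ 2) ∧
      ((L.toAddSubgroup).addSubgroupOf ((craigLat n m l).toAddSubgroup)).index = 2 ^ (n - k) ∧
      (Real.sqrt (8 * m) / 2) ^ n / ((2 : ℝ) ^ (n - k) * (l : ℝ) ^ (m - 1) * Real.sqrt (n + 1))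
        ≥ (2 : ℝ) ^ ((k : ℝ) - (n : ℝ) / 2) * (m : ℝ) ^ ((n : ℝ) / 2)
            / ((l : ℝ) ^ (m - 1) * Real.sqrt (n + 1)) := by
  intro L hL
  refine ⟨?_, index_part n m l k hlodd C hk hCe L hL, ?_⟩
  · intro v hv hv0
    rw [hL, Submodule.mem_inf] at hv
    obtain ⟨h1, h2⟩ := hv
    rw [Submodule.mem_comap, Submodule.restrictScalars_mem] at h2
    exact min_norm n m l hm hmn hl hlp hlodd C hCw v h1 h2 hv0
  · have hkn : k ≤ n := by
      have hmono : Module.finrank (ZMod 2) C ≤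
          Module.finrank (ZMod 2) (LinearMap.ker (sumF n)) :=
        Submodule.finrank_mono (fun x hx => by
          rw [LinearMap.mem_ker, sumF_apply]; exact hCe x hx)
      rw [hk, finrank_ker_sumF] at hmono
      exact hmono
    exact real_part n m l k hm hlp.one_lt.le hkn
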